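/- Let $T_1 > 0$ and $T_2, T_3 < 0$ be real numbers, and define $\bar{f}(p) = 2p^3 + (T_1+T_2+T_3)p^2 - T_1 T_2 T_3$. Then $\bar{f}$ has a root in the open interval $(-T_1, 0)$ if and only if either (i) $-\frac{T_1+T_2+T_3}{3} < 0$ and $\bar{f}(-\frac{T_1+T_2+T_3}{3}) \ge 0$, or (ii) $\bar{f}(-T_1) > 0$. -/

import Mathlib

theorem stmt_1 (T1 T2 T3 : ℝ) (h1 : 0 < T1) (h2 : T2 < 0) (h3 : T3 < 0)
    (f : ℝ → ℝ) (hf : ∀ p, f p = 2 * p ^ 3 + (T1 + T2 + T3) * p ^ 2 - T1 * T2 * T3) :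
    (∃ p, p ∈ Set.Ioo (-T1) 0 ∧ f p = 0) ↔
      ((-(T1 + T2 + T3) / 3 < 0 ∧ 0 ≤ f (-(T1 + T2 + T3) / 3)) ∨ 0 < f (-T1)) := by
  have hfe : f = fun p => 2 * p ^ 3 + (T1 + T2 + T3) * p ^ 2 - T1 * T2 * T3 := funext hf
  subst hfe
  set S := T1 + T2 + T3 with hS
  set Q := T1 * T2 * T3 with hQdef
  set f : ℝ → ℝ := fun p => 2 * p ^ 3 + S * p ^ 2 - Q with hfdef
  have hQ : 0 < Q := by
    have := mul_pos_of_neg_of_neg h2 h3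
    nlinarith
  have hf0 : f 0 < 0 := by simp [hfdef]; linarith
  have hcont : Continuous f := by fun_prop
  have hderiv : ∀ p : ℝ, HasDerivAt f (2 * p * (3 * p + S)) p := by
    intro p
    have h := (((hasDerivAt_pow 3 p).const_mul 2).add
      ((hasDerivAt_pow 2 p).const_mul S)).sub_const Q
    refine h.congr_deriv ?_
    push_cast
    ring
  have hderiv' : ∀ p : ℝ, deriv f p = 2 * p * (3 * p + S) := fun p => (hderiv p).deriv
  set c : ℝ := -S / 3 with hc
  -- c > -T1
  have hcT1 : -T1 < c := by
    have : T2 + T3 < 2 * T1 := by linarith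
    rw [hc, hS]; linarith
  constructor
  · rintro ⟨p, ⟨hp1, hp2⟩, hroot⟩
    -- first: S > 0
    have hSpos : 0 < S := by
      by_contra hSle
      push_neg at hSle
      have hmono : StrictMonoOn f (Set.Iic 0) := by
        apply strictMonoOn_of_deriv_pos (convex_Iic 0) hcont.continuousOn
        intro x hx
        rw [interior_Iic] at hx
        rw [hderiv' x]
        have hx0 : x < 0 := hx
        have : 3 * x + S < 0 := by linarith
        have : 2 * x < 0 := by linarith
        nlinarith
      have := hmono (Set.mem_Iic.mpr hp2.le) (Set.mem_Iic.mpr le_rfl) hp2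
      rw [hroot] at this
      linarith
    have hc0 : c < 0 := by rw [hc]; linarith
    -- f c ≥ 0
    have hfc : 0 ≤ f c := by
      by_contra hfcneg
      push_neg at hfcneg
      have hle : f p ≤ f c := by
        rcases le_total p c with hpc | hcp
        · have hmono : StrictMonoOn f (Set.Iic c) := by
            apply strictMonoOn_of_deriv_pos (convex_Iic c) hcont.continuousOn
            intro x hx
            rw [interior_Iic] at hx
            rw [hderiv' x]
            have hx0 : x < c := hx
            have h1 : 3 * x + S < 0 := by rw [hc] at hx0; linarith
            have h2 : 2 * x < 0 := by nlinarith
            nlinarith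
          exact hmono.monotoneOn (Set.mem_Iic.mpr hpc) (Set.mem_Iic.mpr le_rfl) hpc
        · have hanti : StrictAntiOn f (Set.Icc c 0) := by
            apply strictAntiOn_of_deriv_neg (convex_Icc c 0) hcont.continuousOn
            intro x hx
            rw [interior_Icc] at hx
            rw [hderiv' x]
            have h1 : 3 * x + S > 0 := by rw [hc] at hx; have := hx.1; linarith
            have h2 : 2 * x < 0 := by have := hx.2; linarith
            nlinarith
          exact hanti.antitoneOn (Set.mem_Icc.mpr ⟨le_rfl, hc0.le⟩)
            (Set.mem_Icc.mpr ⟨hcp, hp2.le⟩) hcp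
      rw [hroot] at hle
      linarith
    exact Or.inl ⟨hc0, hfc⟩
  · rintro (⟨hc0, hfc⟩ | hfT1)
    · rcases eq_or_lt_of_le hfc with heq | hlt
      · exact ⟨c, ⟨hcT1, hc0⟩, heq.symm⟩
      · have h0mem : (0:ℝ) ∈ Set.Ioo (f 0) (f c) := ⟨hf0, hlt⟩
        have := intermediate_value_Ioo' hc0.le hcont.continuousOn h0mem
        obtain ⟨x, hx, hfx⟩ := this
        exact ⟨x, ⟨lt_trans hcT1 hx.1, hx.2⟩, hfx⟩
    · have hT1le : -T1 ≤ (0:ℝ) := by linarith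
      have h0mem : (0:ℝ) ∈ Set.Ioo (f 0) (f (-T1)) := ⟨hf0, hfT1⟩
      have := intermediate_value_Ioo' hT1le hcont.continuousOn h0mem
      obtain ⟨x, hx, hfx⟩ := this
      exact ⟨x, hx, hfx⟩
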